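/- Let Y₁, Y₂ be independent standard normals and p, q ∈ (0,1) with p + q < 1. Then P(Y₁ ≤ −Φ⁻¹(p), Y₂ ≤ −Φ⁻¹(q), Y₁ + Y₂ ≤ 0) = (1 − p² − q²)/2. -/

import Mathlib

open MeasureTheory ProbabilityTheory Real Set Filter Matrix Topology

/-- Standard normal CDF. -/
noncomputable def Phi (x : ℝ) : ℝ := ((gaussianReal 0 1) (Set.Iic x)).toReal

/-- Inverse of the standard normal CDF. -/
noncomputable def PhiInv : ℝ → ℝ := Function.invFun Phi

namespace Stmt3Aux

noncomputable def phi : ℝ → ℝ := gaussianPDFReal 0 1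

lemma hv1 : (1 : NNReal) ≠ 0 := one_ne_zero

lemma phi_nonneg (x : ℝ) : 0 ≤ phi x := gaussianPDFReal_nonneg 0 1 x

lemma phi_integrable : Integrable phi := integrable_gaussianPDFReal 0 1

lemma phi_continuous : Continuous phi := by
  unfold phi
  rw [gaussianPDFReal_def]
  fun_prop

lemma phi_even (x : ℝ) : phi (-x) = phi x := by
  simp [phi, gaussianPDFReal, neg_sq]

lemma phi_pos (x : ℝ) : 0 < phi x := gaussianPDFReal_pos 0 1 x hv1

lemma Phi_eq (x : ℝ) : Phi x = ∫ t in Iic x, phi t := by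
  rw [Phi, gaussianReal_apply_eq_integral 0 hv1]
  exact ENNReal.toReal_ofReal (integral_nonneg fun t => phi_nonneg t)

lemma Phi_eq' : Phi = fun x => Phi 0 + ∫ t in (0:ℝ)..x, phi t := by
  funext x
  rw [Phi_eq, Phi_eq, ← intervalIntegral.integral_Iic_sub_Iic
    phi_integrable.integrableOn phi_integrable.integrableOn]
  ring

lemma hasDerivAt_Phi (x : ℝ) : HasDerivAt Phi (phi x) x := by
  rw [Phi_eq']
  exact (intervalIntegral.integral_hasDerivAt_right
    (phi_integrable.intervalIntegrable)
    (phi_continuous.stronglyMeasurableAtFilter _ _)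
    phi_continuous.continuousAt).const_add _

lemma Phi_continuous : Continuous Phi :=
  continuous_iff_continuousAt.mpr fun x => (hasDerivAt_Phi x).continuousAt

lemma Phi_strictMono : StrictMono Phi :=
  strictMono_of_deriv_pos fun x => by
    rw [(hasDerivAt_Phi x).deriv]; exact phi_pos x

lemma Phi_tendsto_atTop : Tendsto Phi atTop (𝓝 1) := by
  have h := tendsto_measure_Iic_atTop (gaussianReal 0 1)
  rw [measure_univ] at h
  have h2 := (ENNReal.tendsto_toReal (by simp : (1:ENNReal) ≠ ⊤)).comp h
  exact h2

lemma Phi_neg (x : ℝ) : Phi (-x) = 1 - Phi x := by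
  have h1 : Phi (-x) = ∫ t in Ioi x, phi t := by
    rw [Phi_eq]
    rw [show (∫ t in Iic (-x), phi t) = ∫ t in Iic (-x), phi (-t) by simp [phi_even]]
    rw [integral_comp_neg_Iic, neg_neg]
  have h2 : (∫ t in Iic x, phi t) + ∫ t in Ioi x, phi t = ∫ t, phi t :=
    intervalIntegral.integral_Iic_add_Ioi phi_integrable.integrableOn
      phi_integrable.integrableOn
  have h3 : (∫ t : ℝ, phi t) = 1 := integral_gaussianPDFReal_eq_one 0 hv1
  rw [h1, Phi_eq]
  linarith

lemma Phi_tendsto_atBot : Tendsto Phi atBot (𝓝 0) := by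
  have h : Tendsto (fun x => 1 - Phi (-x)) atBot (𝓝 (1 - 1)) :=
    tendsto_const_nhds.sub (Phi_tendsto_atTop.comp tendsto_neg_atBot_atTop)
  simp only [sub_self] at h
  refine h.congr fun x => ?_
  rw [Phi_neg]; ring

lemma Phi_nonneg (x : ℝ) : 0 ≤ Phi x := ENNReal.toReal_nonneg

lemma Phi_le_one (x : ℝ) : Phi x ≤ 1 := by
  have h : (gaussianReal 0 1) (Iic x) ≤ 1 := prob_le_one
  have := ENNReal.toReal_mono (by simp) h
  exact this

lemma exists_Phi_eq {p : ℝ} (hp : p ∈ Set.Ioo (0:ℝ) 1) : ∃ x, Phi x = p := by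
  obtain ⟨a, ha⟩ := ((tendsto_order.mp Phi_tendsto_atBot).2 p hp.1).exists
  obtain ⟨b, hb⟩ := ((tendsto_order.mp Phi_tendsto_atTop).1 p hp.2).exists
  have hab : a ≤ b := (Phi_strictMono.lt_iff_lt.mp (ha.trans hb)).le
  obtain ⟨x, _, hx⟩ := intermediate_value_Icc hab Phi_continuous.continuousOn
    (⟨ha.le, hb.le⟩ : p ∈ Icc (Phi a) (Phi b))
  exact ⟨x, hx⟩

lemma Phi_PhiInv {p : ℝ} (hp : p ∈ Set.Ioo (0:ℝ) 1) : Phi (PhiInv p) = p :=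
  Function.invFun_eq (exists_Phi_eq hp)

lemma meas_Iic (y : ℝ) : (gaussianReal 0 1) (Iic y) = ENNReal.ofReal (Phi y) := by
  rw [Phi, ENNReal.ofReal_toReal (measure_ne_top _ _)]

/-- derivative of G -/
lemma hasDerivAt_G (x : ℝ) :
    HasDerivAt (fun x => -((Phi (-x)) ^ 2 / 2)) (Phi (-x) * phi x) x := by
  have h1 : HasDerivAt (fun x : ℝ => Phi (-x)) (-phi x) x := by
    have := (hasDerivAt_Phi (-x)).comp x (hasDerivAt_neg x)
    simp only [phi_even, mul_neg, mul_one] at this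
    exact this
  have h2 := ((h1.fun_pow 2).div_const 2).fun_neg
  refine h2.congr_deriv ?_
  ring

lemma integrable_Phiphi : Integrable (fun x => Phi (-x) * phi x) := by
  refine phi_integrable.bdd_mul (c := 1) ?_ (ae_of_all _ fun x => ?_)
  · exact (Phi_continuous.comp continuous_neg).aestronglyMeasurable
  · rw [Real.norm_eq_abs, abs_of_nonneg (Phi_nonneg _)]
    exact Phi_le_one _

lemma G_tendsto_atTop : Tendsto (fun x => -((Phi (-x)) ^ 2 / 2)) atTop (𝓝 0) := by
  have h : Tendsto (fun x : ℝ => Phi (-x)) atTop (𝓝 0) :=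
    Phi_tendsto_atBot.comp tendsto_neg_atTop_atBot
  have := ((h.pow 2).div_const 2).neg
  simpa using this

lemma G_tendsto_atBot : Tendsto (fun x => -((Phi (-x)) ^ 2 / 2)) atBot (𝓝 (-(1/2))) := by
  have h : Tendsto (fun x : ℝ => Phi (-x)) atBot (𝓝 1) :=
    Phi_tendsto_atTop.comp tendsto_neg_atBot_atTop
  have := ((h.pow 2).div_const 2).neg
  simpa using this

lemma integral_Ioi_eq (a : ℝ) : ∫ x in Ioi a, Phi (-x) * phi x = Phi (-a) ^ 2 / 2 := by
  have := integral_Ioi_of_hasDerivAt_of_tendsto' (a := a) (fun x _ => hasDerivAt_G x)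
    integrable_Phiphi.integrableOn G_tendsto_atTop
  rw [this]; ring

lemma integral_univ_eq : ∫ x, Phi (-x) * phi x = 1 / 2 := by
  have := integral_of_hasDerivAt_of_tendsto hasDerivAt_G integrable_Phiphi
    G_tendsto_atBot G_tendsto_atTop
  rw [this]; ring

/-- turn a gaussian lintegral of `ofReal (Phi (-x))` restricted to `s` into a real integral -/
lemma lintegral_aux (s : Set ℝ) (hs : MeasurableSet s) :
    ∫⁻ x in s, ENNReal.ofReal (Phi (-x)) ∂(gaussianReal 0 1)
      = ENNReal.ofReal (∫ x in s, Phi (-x) * phi x) := by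
  have hg : Measurable fun x : ℝ => ENNReal.ofReal (Phi (-x)) :=
    (Phi_continuous.measurable.comp measurable_neg).ennreal_ofReal
  rw [gaussianReal_of_var_ne_zero 0 hv1, restrict_withDensity hs,
    lintegral_withDensity_eq_lintegral_mul _ (measurable_gaussianPDF 0 1) hg]
  have heq : ∀ x, (gaussianPDF 0 1 * fun x => ENNReal.ofReal (Phi (-x))) x
      = ENNReal.ofReal (Phi (-x) * phi x) := fun x => by
    simp only [Pi.mul_apply, gaussianPDF, phi]
    rw [← ENNReal.ofReal_mul (gaussianPDFReal_nonneg 0 1 x), mul_comm]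
  simp_rw [heq]
  rw [← ofReal_integral_eq_lintegral_ofReal integrable_Phiphi.integrableOn
    (ae_of_all _ fun x => mul_nonneg (Phi_nonneg _) (phi_nonneg x))]

lemma key (a : ℝ) :
    ((gaussianReal 0 1).prod (gaussianReal 0 1)) {z : ℝ × ℝ | a < z.1 ∧ z.1 + z.2 ≤ 0}
      = ENNReal.ofReal (Phi (-a) ^ 2 / 2) := by
  have hS : MeasurableSet {z : ℝ × ℝ | a < z.1 ∧ z.1 + z.2 ≤ 0} :=
    (measurableSet_lt measurable_const measurable_fst).inter
      (measurableSet_le (measurable_fst.add measurable_snd) measurable_const)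
  rw [Measure.prod_apply hS]
  have hsec : ∀ x : ℝ,
      (gaussianReal 0 1) (Prod.mk x ⁻¹' {z : ℝ × ℝ | a < z.1 ∧ z.1 + z.2 ≤ 0})
        = Set.indicator (Ioi a) (fun x => ENNReal.ofReal (Phi (-x))) x := by
    intro x
    by_cases hx : a < x
    · have hpre : Prod.mk x ⁻¹' {z : ℝ × ℝ | a < z.1 ∧ z.1 + z.2 ≤ 0} = Iic (-x) := by
        ext y
        simp only [mem_preimage, mem_setOf_eq, mem_Iic, hx, true_and]
        constructor <;> intro h <;> linarith
      rw [hpre, meas_Iic, Set.indicator_of_mem (Set.mem_Ioi.mpr hx)]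
    · have hpre : Prod.mk x ⁻¹' {z : ℝ × ℝ | a < z.1 ∧ z.1 + z.2 ≤ 0} = ∅ := by
        ext y; simp [hx]
      rw [hpre, measure_empty, Set.indicator_of_notMem (by simpa using hx)]
  simp_rw [hsec]
  rw [lintegral_indicator measurableSet_Ioi, lintegral_aux _ measurableSet_Ioi,
    integral_Ioi_eq]

lemma total :
    ((gaussianReal 0 1).prod (gaussianReal 0 1)) {z : ℝ × ℝ | z.1 + z.2 ≤ 0}
      = ENNReal.ofReal (1 / 2) := by
  have hS : MeasurableSet {z : ℝ × ℝ | z.1 + z.2 ≤ 0} :=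
    measurableSet_le (measurable_fst.add measurable_snd) measurable_const
  rw [Measure.prod_apply hS]
  have hsec : ∀ x : ℝ,
      (gaussianReal 0 1) (Prod.mk x ⁻¹' {z : ℝ × ℝ | z.1 + z.2 ≤ 0})
        = ENNReal.ofReal (Phi (-x)) := by
    intro x
    have hpre : Prod.mk x ⁻¹' {z : ℝ × ℝ | z.1 + z.2 ≤ 0} = Iic (-x) := by
      ext y
      simp only [mem_preimage, mem_setOf_eq, mem_Iic]
      constructor <;> intro h <;> linarith
    rw [hpre, meas_Iic]
  simp_rw [hsec]
  rw [← Measure.restrict_univ (μ := gaussianReal 0 1), lintegral_aux _ MeasurableSet.univ,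
    Measure.restrict_univ, integral_univ_eq]

lemma key2 (b : ℝ) :
    ((gaussianReal 0 1).prod (gaussianReal 0 1)) {z : ℝ × ℝ | b < z.2 ∧ z.1 + z.2 ≤ 0}
      = ENNReal.ofReal (Phi (-b) ^ 2 / 2) := by
  have hS : MeasurableSet {z : ℝ × ℝ | b < z.1 ∧ z.1 + z.2 ≤ 0} :=
    (measurableSet_lt measurable_const measurable_fst).inter
      (measurableSet_le (measurable_fst.add measurable_snd) measurable_const)
  have hset : {z : ℝ × ℝ | b < z.2 ∧ z.1 + z.2 ≤ 0}
      = Prod.swap ⁻¹' {z : ℝ × ℝ | b < z.1 ∧ z.1 + z.2 ≤ 0} := by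
    ext z
    simp only [mem_preimage, mem_setOf_eq, Prod.fst_swap, Prod.snd_swap]
    constructor <;> rintro ⟨h1, h2⟩ <;> exact ⟨h1, by linarith⟩
  rw [hset, ← Measure.map_apply measurable_swap hS, Measure.prod_swap, key]

end Stmt3Aux

open Stmt3Aux in
/-- For independent standard normals and p+q < 1,
P(Y₁ ≤ -Φ⁻¹(p), Y₂ ≤ -Φ⁻¹(q), Y₁+Y₂ ≤ 0) = (1-p²-q²)/2. -/
theorem stmt3 {A : Type*} [MeasurableSpace A] (P : Measure A) [IsProbabilityMeasure P]
    (Y₁ Y₂ : A → ℝ) (h₁ : Measurable Y₁) (h₂ : Measurable Y₂)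
    (hl₁ : P.map Y₁ = gaussianReal 0 1) (hl₂ : P.map Y₂ = gaussianReal 0 1)
    (hind : IndepFun Y₁ Y₂ P) (p q : ℝ)
    (hp : p ∈ Set.Ioo (0:ℝ) 1) (hq : q ∈ Set.Ioo (0:ℝ) 1) (hpq : p + q < 1) :
    (P {ω | Y₁ ω ≤ -PhiInv p ∧ Y₂ ω ≤ -PhiInv q ∧ Y₁ ω + Y₂ ω ≤ 0}).toReal
      = (1 - p^2 - q^2) / 2 := by
  set α := PhiInv p with hα
  set β := PhiInv q with hβ
  have hPα : Phi α = p := Phi_PhiInv hp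
  have hPβ : Phi β = q := Phi_PhiInv hq
  have hab : α + β < 0 := by
    by_contra h
    push_neg at h
    have h1 : Phi (-α) ≤ Phi β := Phi_strictMono.monotone (by linarith)
    rw [Phi_neg, hPα, hPβ] at h1
    linarith
  -- joint law
  have hmap : P.map (fun ω => (Y₁ ω, Y₂ ω)) = (gaussianReal 0 1).prod (gaussianReal 0 1) := by
    have h := (indepFun_iff_map_prod_eq_prod_map_map h₁.aemeasurable h₂.aemeasurable).mp hind
    rwa [hl₁, hl₂] at h
  set μ2 := (gaussianReal 0 1).prod (gaussianReal 0 1) with hμ2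
  set SA : Set (ℝ × ℝ) := {z | z.1 ≤ -α ∧ z.2 ≤ -β ∧ z.1 + z.2 ≤ 0} with hSA
  set B1 : Set (ℝ × ℝ) := {z | -α < z.1 ∧ z.1 + z.2 ≤ 0} with hB1
  set B2 : Set (ℝ × ℝ) := {z | -β < z.2 ∧ z.1 + z.2 ≤ 0} with hB2
  set C : Set (ℝ × ℝ) := {z | z.1 + z.2 ≤ 0} with hC
  have hSAm : MeasurableSet SA :=
    (measurableSet_le measurable_fst measurable_const).inter
      ((measurableSet_le measurable_snd measurable_const).inter
        (measurableSet_le (measurable_fst.add measurable_snd) measurable_const))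
  have hB1m : MeasurableSet B1 :=
    (measurableSet_lt measurable_const measurable_fst).inter
      (measurableSet_le (measurable_fst.add measurable_snd) measurable_const)
  have hB2m : MeasurableSet B2 :=
    (measurableSet_lt measurable_const measurable_snd).inter
      (measurableSet_le (measurable_fst.add measurable_snd) measurable_const)
  have hPA : P {ω | Y₁ ω ≤ -PhiInv p ∧ Y₂ ω ≤ -PhiInv q ∧ Y₁ ω + Y₂ ω ≤ 0} = μ2 SA := by
    have hset : {ω | Y₁ ω ≤ -PhiInv p ∧ Y₂ ω ≤ -PhiInv q ∧ Y₁ ω + Y₂ ω ≤ 0}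
        = (fun ω => (Y₁ ω, Y₂ ω)) ⁻¹' SA := rfl
    rw [hset, ← Measure.map_apply (h₁.prodMk h₂) hSAm, hmap]
  -- partition of C
  have hCeq : C = SA ∪ B1 ∪ B2 := by
    ext z
    simp only [hSA, hB1, hB2, hC, Set.mem_union, Set.mem_setOf_eq]
    constructor
    · intro hz
      by_cases h1 : z.1 ≤ -α
      · by_cases h2 : z.2 ≤ -β
        · exact Or.inl (Or.inl ⟨h1, h2, hz⟩)
        · exact Or.inr ⟨lt_of_not_ge h2, hz⟩
      · exact Or.inl (Or.inr ⟨lt_of_not_ge h1, hz⟩)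
    · rintro ((⟨_, _, h⟩ | ⟨_, h⟩) | ⟨_, h⟩) <;> exact h
  have d1 : Disjoint SA B1 := by
    rw [Set.disjoint_left]
    rintro z ⟨hz1, hz2, hz3⟩ ⟨hw1, hw2⟩
    exact absurd hz1 (not_le.mpr hw1)
  have d2 : Disjoint (SA ∪ B1) B2 := by
    rw [Set.disjoint_left]
    rintro z (⟨hz1, hz2, hz3⟩ | ⟨hz1, hz2⟩) ⟨hw1, hw2⟩
    · exact absurd hz2 (not_le.mpr hw1)
    · linarith
  have hmeas_eq : μ2 C = μ2 SA + μ2 B1 + μ2 B2 := by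
    rw [hCeq, measure_union d2 hB2m, measure_union d1 hB1m]
  have hCval : μ2 C = ENNReal.ofReal (1 / 2) := total
  have hB1val : μ2 B1 = ENNReal.ofReal (p ^ 2 / 2) := by
    have := key (-α)
    rw [neg_neg, hPα] at this
    exact this
  have hB2val : μ2 B2 = ENNReal.ofReal (q ^ 2 / 2) := by
    have := key2 (-β)
    rw [neg_neg, hPβ] at this
    exact this
  rw [hCval, hB1val, hB2val] at hmeas_eq
  have h2 := congrArg ENNReal.toReal hmeas_eq
  rw [ENNReal.toReal_add (by finiteness) (by finiteness),
    ENNReal.toReal_add (by finiteness) (by finiteness),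
    ENNReal.toReal_ofReal (by positivity), ENNReal.toReal_ofReal (by positivity),
    ENNReal.toReal_ofReal (by positivity)] at h2
  rw [hPA]
  linarith
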